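/- Let C be a k-dimensional constant weight code of weight d over a finite field F_q with q elements, with k ≥ 1. Then C meets its Griesmer bound with equality: d_k = ∑_{i=0}^{k−1} ⌈d/q^i⌉, where d_k = w(C) is the weight of the whole code C. -/

import Mathlib

/-- The support of a subcode `D` of `F_q^n`. -/
def codeSupp {F : Type*} [Field F] {n : ℕ} (D : Submodule F (Fin n → F)) : Set (Fin n) :=
  {x | ∃ d ∈ D, d x ≠ 0}

/-- The weight of a subcode: the cardinality of its support. -/
noncomputable def codeWt {F : Type*} [Field F] {n : ℕ} (D : Submodule F (Fin n → F)) : ℕ :=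
  (codeSupp D).ncard

open Finset

lemma ceilDiv_of_dvd' {a b : ℕ} (hb : 0 < b) (h : b ∣ a) : a ⌈/⌉ b = a / b := by
  obtain ⟨t, rfl⟩ := h
  rw [Nat.ceilDiv_eq_add_pred_div, Nat.mul_div_cancel_left _ hb,
    Nat.add_sub_assoc hb, Nat.mul_add_div hb, Nat.div_eq_of_lt (by omega), Nat.add_zero]

lemma nat_geom_sum (q : ℕ) (hq : 1 ≤ q) (k : ℕ) :
    (q - 1) * ∑ i ∈ range k, q ^ i = q ^ k - 1 := by
  induction k with
  | zero => simp
  | succ k ih =>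
    rw [Finset.sum_range_succ, Nat.mul_add, ih, pow_succ, Nat.sub_one_mul]
    have h1 : 1 ≤ q ^ k := Nat.one_le_pow _ _ hq
    have h2 : q ^ k ≤ q ^ k * q := Nat.le_mul_of_pos_right _ hq
    have h3 : q ^ k * q = q * q ^ k := Nat.mul_comm _ _
    omega

lemma count_nonzero_eval {F : Type*} [Field F] [Fintype F] {n : ℕ}
    (C : Submodule F (Fin n → F)) (x : Fin n) (h : ∃ c ∈ C, c x ≠ 0) :
    Nat.card {c : C // (c : Fin n → F) x ≠ 0} =
      Fintype.card F ^ Module.finrank F C - Fintype.card F ^ (Module.finrank F C - 1) := by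
  classical
  set q := Fintype.card F
  set k := Module.finrank F C with hk
  obtain ⟨c0, hc0, hcx⟩ := h
  haveI : Fintype C := Fintype.ofFinite _
  let φ : C →ₗ[F] F := (LinearMap.proj x).comp C.subtype
  have hsurj : Function.Surjective φ := by
    intro b
    refine ⟨(b * (c0 x)⁻¹) • ⟨c0, hc0⟩, ?_⟩
    simp [φ, mul_assoc, inv_mul_cancel₀ hcx]
  have hrange : LinearMap.range φ = ⊤ := LinearMap.range_eq_top.2 hsurj
  have hrk : Module.finrank F (LinearMap.ker φ) = k - 1 := by
    have := LinearMap.finrank_range_add_finrank_ker φ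
    rw [hrange, finrank_top, Module.finrank_self] at this
    omega
  haveI : Fintype (LinearMap.ker φ) := Fintype.ofFinite _
  have hcker : Fintype.card (LinearMap.ker φ) = q ^ (k - 1) := by
    rw [Module.card_eq_pow_finrank (K := F), hrk]
  have hcC : Fintype.card C = q ^ k := by rw [Module.card_eq_pow_finrank (K := F), hk]
  have heq : Fintype.card {c : C // (c : Fin n → F) x = 0} = q ^ (k - 1) := by
    rw [← hcker]
    exact Fintype.card_congr (Equiv.subtypeEquivRight (by
      intro c; simp [LinearMap.mem_ker, φ]))
  rw [Nat.card_eq_fintype_card,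
    Fintype.card_subtype_compl (p := fun c : C => (c : Fin n → F) x = 0), hcC, heq]

theorem constant_weight_meets_griesmer
    {F : Type*} [Field F] [Fintype F] {n k q d : ℕ} (hq : Fintype.card F = q)
    (C : Submodule F (Fin n → F)) (hk : Module.finrank F C = k) (hk1 : 1 ≤ k)
    (hconst : ∀ c ∈ C, c ≠ 0 → ({x | c x ≠ 0} : Set (Fin n)).ncard = d) :
    codeWt C = ∑ i ∈ Finset.range k, d ⌈/⌉ q ^ i := by
  classical
  subst hq
  set q := Fintype.card F with hq
  have hq2 : 2 ≤ q := Fintype.one_lt_card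
  haveI : Fintype C := Fintype.ofFinite _
  have hcC : Fintype.card C = q ^ k := by rw [Module.card_eq_pow_finrank (K := F), hk]
  set S : Finset (Fin n) := Finset.univ.filter (fun x => ∃ c ∈ C, c x ≠ 0) with hS
  have hwt : codeWt C = S.card := by
    rw [codeWt, ← Set.ncard_coe_finset]
    congr 1
    ext x
    simp [codeSupp, hS]
  -- double counting
  have hdc : ∑ c : C, (Finset.univ.filter (fun x => (c : Fin n → F) x ≠ 0)).card
      = ∑ x : Fin n, (Finset.univ.filter (fun c : C => (c : Fin n → F) x ≠ 0)).card := by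
    simp_rw [Finset.card_filter]
    exact Finset.sum_comm
  have hx : ∀ x : Fin n, (Finset.univ.filter (fun c : C => (c : Fin n → F) x ≠ 0)).card
      = if x ∈ S then q ^ k - q ^ (k - 1) else 0 := by
    intro x
    by_cases hxS : x ∈ S
    · rw [if_pos hxS]
      have h : ∃ c ∈ C, c x ≠ 0 := by simpa [hS] using hxS
      have h2 := count_nonzero_eval C x h
      rw [hk] at h2
      rw [← h2, Nat.card_eq_fintype_card, Fintype.card_subtype]
    · rw [if_neg hxS, Finset.card_eq_zero, Finset.filter_eq_empty_iff]
      intro c _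
      simp only [not_not]
      by_contra hc
      exact hxS (by simp only [hS, Finset.mem_filter, Finset.mem_univ, true_and]
                    exact ⟨c, c.2, hc⟩)
  have hsum_x : ∑ x : Fin n, (Finset.univ.filter (fun c : C => (c : Fin n → F) x ≠ 0)).card
      = S.card * (q ^ k - q ^ (k - 1)) := by
    rw [Finset.sum_congr rfl (fun x _ => hx x), Finset.sum_ite_mem, Finset.univ_inter,
      Finset.sum_const, smul_eq_mul]
  have hwtc : ∀ c : C, (Finset.univ.filter (fun x => (c : Fin n → F) x ≠ 0)).card
      = if (c : Fin n → F) = 0 then 0 else d := by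
    intro c
    by_cases h0 : (c : Fin n → F) = 0
    · simp [h0]
    · rw [if_neg h0, ← hconst c c.2 h0, ← Set.ncard_coe_finset]
      congr 1
      ext x
      simp
  have hcard0 : (Finset.univ.filter (fun c : C => ¬ ((c : Fin n → F) = 0))).card = q ^ k - 1 := by
    rw [Finset.filter_not, Finset.card_sdiff_of_subset (Finset.filter_subset _ _), Finset.card_univ, hcC]
    congr 1
    rw [Finset.card_eq_one]
    refine ⟨0, ?_⟩
    ext c
    simp [Finset.mem_filter]
  have hlhs : ∑ c : C, (Finset.univ.filter (fun x => (c : Fin n → F) x ≠ 0)).card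
      = (q ^ k - 1) * d := by
    rw [Finset.sum_congr rfl (fun c _ => hwtc c), Finset.sum_ite, Finset.sum_const,
      Finset.sum_const, smul_eq_mul, smul_eq_mul, mul_zero, zero_add, hcard0]
  have key : S.card * (q ^ k - q ^ (k - 1)) = (q ^ k - 1) * d := by
    rw [← hsum_x, ← hdc, hlhs]
  -- arithmetic
  set e := k - 1 with he
  set S' := ∑ i ∈ range k, q ^ i with hS'
  have hgeom : (q - 1) * S' = q ^ k - 1 := nat_geom_sum q (by omega) k
  have hpe : 0 < q ^ e := Nat.pow_pos (by omega)
  have hqpow : q ^ k - q ^ e = q ^ e * (q - 1) := by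
    have hke : k = e + 1 := by omega
    rw [hke, pow_succ, Nat.mul_sub, mul_one]
  have key3 : S.card * q ^ e = S' * d := by
    have key2 : S.card * q ^ e * (q - 1) = S' * d * (q - 1) := by
      calc S.card * q ^ e * (q - 1) = S.card * (q ^ k - q ^ e) := by rw [hqpow]; ring
        _ = (q ^ k - 1) * d := key
        _ = ((q - 1) * S') * d := by rw [hgeom]
        _ = S' * d * (q - 1) := by ring
    exact Nat.eq_of_mul_eq_mul_right (by omega) key2
  have hcop : Nat.Coprime (q ^ e) S' := by
    apply Nat.Coprime.pow_left
    have hS'eq : S' = 1 + (∑ i ∈ range e, q ^ i) * q := by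
      rw [hS', show k = e + 1 by omega, Finset.sum_range_succ']
      simp only [pow_zero, pow_succ, ← Finset.sum_mul]
      omega
    rw [hS'eq]
    exact (Nat.coprime_add_mul_right_right q 1 (∑ i ∈ range e, q ^ i)).2 (Nat.coprime_one_right q)
  have hdvd : q ^ e ∣ d := by
    refine hcop.dvd_of_dvd_mul_left ⟨S.card, ?_⟩
    rw [← key3]; ring
  obtain ⟨m, hm⟩ := hdvd
  have hw : S.card = m * S' := by
    refine Nat.eq_of_mul_eq_mul_right hpe ?_
    rw [key3, hm]; ring
  have hrhs : ∑ i ∈ Finset.range k, d ⌈/⌉ q ^ i = m * S' := by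
    have hterm : ∀ i ∈ Finset.range k, d ⌈/⌉ q ^ i = m * q ^ (e - i) := by
      intro i hi
      have hi' : i ≤ e := by rw [Finset.mem_range] at hi; omega
      have hpi : 0 < q ^ i := Nat.pow_pos (by omega)
      have hdvd' : q ^ i ∣ d := by
        rw [hm]; exact Dvd.dvd.mul_right (pow_dvd_pow q hi') m
      rw [ceilDiv_of_dvd' hpi hdvd', hm,
        show q ^ e = q ^ i * q ^ (e - i) by rw [← pow_add]; congr 1; omega,
        mul_assoc, Nat.mul_div_cancel_left _ hpi]
      ring
    rw [Finset.sum_congr rfl hterm, ← Finset.mul_sum]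
    congr 1
    rw [hS', ← Finset.sum_range_reflect]
    refine Finset.sum_congr rfl fun j hj => ?_
    rw [Finset.mem_range] at hj
    congr 1
    omega
  rw [hwt, hw, hrhs]
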